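/- Let G be a finite group, K ≤ G, κ a linear character of K, and H a subgroup of the stabilizer G(κ). Then the map φ ↦ φ * κ, where (φ * κ)(στ) = φ(σ)κ(τ) for σ ∈ H, τ ∈ K, is a well-defined bijection from the set of irreducible characters of H lying over κ restricted to H ∩ K, onto the set of irreducible characters of HK lying over κ. The inverse bijection is restriction from HK to H. -/

import Mathlib

open scoped BigOperators Pointwise Classical

noncomputable section

variable {G : Type}

/-- Extension by zero to `G` of a function defined on a subgroup `H` of `G`. -/
def extZero [Group G] (H : Subgroup G) (φ : H → ℂ) (g : G) : ℂ :=
  if h : g ∈ H then φ ⟨g, h⟩ else 0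

/-- The character of `G` induced from the function `φ` on the subgroup `H`. -/
def indChar [Group G] [Fintype G] (H : Subgroup G) (φ : H → ℂ) : G → ℂ :=
  fun g => (Nat.card H : ℂ)⁻¹ * ∑ x : G, extZero H φ (x * g * x⁻¹)

/-- The character of an intermediate subgroup `K` induced from `φ` on `H ≤ K`,
viewed as a function on `G` supported on `K`. -/
def indCharTo [Group G] [Fintype G] (K H : Subgroup G) (φ : H → ℂ) : G → ℂ :=
  fun g => (Nat.card H : ℂ)⁻¹ * ∑ x : G, if x ∈ K then extZero H φ (x * g * x⁻¹) else 0

/-- The kernel of a character: the set where it takes the value `f 1`. -/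
def kerSet {X : Type*} [One X] (f : X → ℂ) : Set X := {x | f x = f 1}

/-- The center of a character: the set where `|f x| = f 1`. -/
def centSet {X : Type*} [One X] (f : X → ℂ) : Set X :=
  {x | (‖f x‖ : ℂ) = f 1}

/-- The central character associated with a character. -/
def zetaChar {X : Type*} [One X] (f : X → ℂ) : X → ℂ := fun x => f x / f 1

/-- `f` is a (nonzero) complex character of `X`. -/
def IsChar (X : Type) [Group X] (f : X → ℂ) : Prop :=
  (∃ V : FDRep ℂ X, FDRep.character V = f) ∧ f 1 ≠ 0

/-- `f` is an irreducible complex character of `X`. -/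
def IsIrrChar (X : Type) [Group X] (f : X → ℂ) : Prop :=
  ∃ V : FDRep ℂ X, CategoryTheory.Simple V ∧ FDRep.character V = f

/-- The inner product of two class functions on the subgroup `H` of `G`. -/
def innerSub [Group G] [Fintype G] (H : Subgroup G) (f φ : H → ℂ) : ℂ :=
  (Nat.card H : ℂ)⁻¹ * ∑ x : G, extZero H f x * (starRingEnd ℂ) (extZero H φ x)

/-- Restriction of a function on `K` to a smaller subgroup `L ≤ K`. -/
def resTo [Group G] {K : Subgroup G} (L : Subgroup G) (h : L ≤ K) (χ : K → ℂ) : L → ℂ :=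
  fun x => χ ⟨x, h x.2⟩

/-- `lam : G → ℂ` is (the extension of) a linear character of the subgroup `L`. -/
def IsLinOn [Group G] (L : Subgroup G) (lam : G → ℂ) : Prop :=
  lam 1 = 1 ∧ ∀ a ∈ L, ∀ b ∈ L, lam (a * b) = lam a * lam b

/-- The stabilizer in `G` of the character `φ` of the subgroup `H`. -/
def stabSet [Group G] (H : Subgroup G) (φ : H → ℂ) : Set G :=
  {g : G | (∀ x : G, x ∈ H ↔ g⁻¹ * x * g ∈ H) ∧
    ∀ x : G, extZero H φ (g⁻¹ * x * g) = extZero H φ x}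

/-- The stabilizer in `G` of a linear character `lam` of a normal subgroup `L`,
as a subgroup of `G`. -/
def linStab [Group G] (L : Subgroup G) (hL : L.Normal) (lam : G → ℂ) : Subgroup G where
  carrier := {g : G | ∀ x ∈ L, lam (g⁻¹ * x * g) = lam x}
  one_mem' := by intro x hx; simp
  mul_mem' := by
    intro a b ha hb x hx
    have h1 : a⁻¹ * x * a ∈ L := by simpa using hL.conj_mem x hx a⁻¹
    have key : (a * b)⁻¹ * x * (a * b) = b⁻¹ * (a⁻¹ * x * a) * b := by group
    rw [key, hb _ h1, ha _ hx]
  inv_mem' := by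
    intro a ha x hx
    have h1 : a * x * a⁻¹ ∈ L := hL.conj_mem x hx a
    have h2 := ha _ h1
    rw [show a⁻¹ * (a * x * a⁻¹) * a = x from by group] at h2
    rw [show a⁻¹⁻¹ * x * a⁻¹ = a * x * a⁻¹ from by group]
    exact h2.symm


section Aux2
open CategoryTheory Module

section Aux
variable [Group G] [Fintype G]

lemma sum_eq_sum_subgroup (L : Subgroup G) (Q : G → ℂ) (h0 : ∀ x, x ∉ L → Q x = 0) :
    ∑ x : G, Q x = ∑ b : L, Q ↑b := by
  classical
  have h1 : ∑ b : ↥L, Q ↑b = ∑ x ∈ Finset.univ.filter (· ∈ L), Q x :=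
    (Finset.sum_subtype _ (by simp) Q).symm
  rw [h1, Finset.sum_filter_of_ne (fun x _ hx => by by_contra h; exact hx (h0 x h))]

lemma innerSub_eq (L : Subgroup G) (f φ : ↥L → ℂ) :
    innerSub L f φ = (Nat.card ↥L : ℂ)⁻¹ * ∑ b : ↥L, f b * (starRingEnd ℂ) (φ b) := by
  unfold innerSub
  congr 1
  rw [sum_eq_sum_subgroup L _ (fun x hx => by simp [extZero, dif_neg hx])]
  refine Finset.sum_congr rfl fun b _ => ?_
  simp [extZero]

variable {L : Subgroup G} {κ : G → ℂ} (hκ : IsLinOn L κ)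

include hκ

omit [Fintype G] in
lemma lin_pow {τ : G} (hτ : τ ∈ L) (n : ℕ) : κ (τ ^ n) = κ τ ^ n := by
  induction n with
  | zero => rw [pow_zero, pow_zero, hκ.1]
  | succ n ih => rw [pow_succ, hκ.2 _ (pow_mem hτ n) _ hτ, ih, pow_succ]

omit [Fintype G] in
lemma lin_inv_mul {τ : G} (hτ : τ ∈ L) : κ τ⁻¹ * κ τ = 1 := by
  rw [← hκ.2 _ (inv_mem hτ) _ hτ, inv_mul_cancel, hκ.1]

omit [Fintype G] in
lemma lin_ne_zero {τ : G} (hτ : τ ∈ L) : κ τ ≠ 0 := by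
  intro h
  have h2 := lin_inv_mul hκ hτ
  rw [h, mul_zero] at h2
  exact one_ne_zero (α := ℂ) h2.symm

lemma lin_conj_mul {τ : G} (hτ : τ ∈ L) : (starRingEnd ℂ) (κ τ) * κ τ = 1 := by
  have hord : κ τ ^ orderOf τ = 1 := by
    rw [← lin_pow hκ hτ, pow_orderOf_eq_one, hκ.1]
  have habs : ‖κ τ‖ = 1 := by
    have h1 : ‖κ τ‖ ^ orderOf τ = 1 := by
      rw [← norm_pow, hord, norm_one]
    have hn : orderOf τ ≠ 0 := (orderOf_pos τ).ne'
    have h2 := (pow_left_inj₀ (norm_nonneg (κ τ)) zero_le_one hn)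
    rw [one_pow] at h2
    exact h2.mp h1
  have h3 := Complex.normSq_eq_norm_sq (κ τ)
  rw [habs] at h3
  calc (starRingEnd ℂ) (κ τ) * κ τ = ((Complex.normSq (κ τ) : ℝ) : ℂ) := by
        rw [mul_comm]; exact Complex.mul_conj _
    _ = 1 := by rw [h3]; norm_num

lemma lin_conj_eq_inv {τ : G} (hτ : τ ∈ L) : (starRingEnd ℂ) (κ τ) = κ τ⁻¹ := by
  have h1 := lin_conj_mul hκ hτ
  have h2 := lin_inv_mul hκ hτ
  rw [← h2] at h1
  exact mul_right_cancel₀ (lin_ne_zero hκ hτ) h1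

/-- inner product of something proportional to κ with κ -/
lemma innerSub_scaled (f : ↥L → ℂ) (d : ℂ) (hf : ∀ x : ↥L, f x = d * κ ↑x) :
    innerSub L f (fun x : ↥L => κ ↑x) = d := by
  rw [innerSub_eq]
  have hterm : ∀ x : ↥L, f x * (starRingEnd ℂ) (κ ↑x) = d := by
    intro x
    rw [hf, mul_assoc, mul_comm (κ ↑x), lin_conj_mul hκ x.2, mul_one]
  simp only [hterm]
  rw [Finset.sum_const, Finset.card_univ, ← Nat.cast_smul_eq_nsmul ℂ, smul_eq_mul,
    ← mul_assoc, Nat.card_eq_fintype_card,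
    inv_mul_cancel₀ (Nat.cast_ne_zero.mpr Fintype.card_ne_zero), one_mul]

end Aux

section Decomp
variable [Group G] (K H : Subgroup G)

lemma mem_sup_decomp (hconj : ∀ h ∈ H, ∀ x : G, x ∈ K ↔ h⁻¹ * x * h ∈ K) :
    ∀ g ∈ H ⊔ K, ∃ σ τ : G, σ ∈ H ∧ τ ∈ K ∧ g = σ * τ := by
  intro g hg
  let S : Subgroup G :=
    { carrier := {g | ∃ σ τ : G, σ ∈ H ∧ τ ∈ K ∧ g = σ * τ}
      one_mem' := ⟨1, 1, one_mem H, one_mem K, (one_mul 1).symm⟩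
      mul_mem' := by
        rintro a b ⟨σ₁, τ₁, h1, k1, rfl⟩ ⟨σ₂, τ₂, h2, k2, rfl⟩
        exact ⟨σ₁ * σ₂, (σ₂⁻¹ * τ₁ * σ₂) * τ₂, mul_mem h1 h2,
          mul_mem ((hconj σ₂ h2 τ₁).mp k1) k2, by group⟩
      inv_mem' := by
        rintro a ⟨σ, τ, h1, k1, rfl⟩
        refine ⟨σ⁻¹, σ * τ⁻¹ * σ⁻¹, inv_mem h1, ?_, by group⟩
        have h2 := (hconj σ⁻¹ (inv_mem h1) τ⁻¹).mp (inv_mem k1)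
        simpa using h2 }
  have hle : H ⊔ K ≤ S := sup_le
    (fun x hx => ⟨x, 1, hx, one_mem K, (mul_one x).symm⟩)
    (fun x hx => ⟨1, x, one_mem H, hx, (one_mul x).symm⟩)
  exact hle hg

end Decomp

section SimpleOf
open CategoryTheory Module
variable {X : Type} [Group X] [Fintype X]

lemma exists_retraction (V Y : FDRep ℂ X) (f : Y ⟶ V)
    (hinj : LinearMap.ker f.hom.hom.hom = ⊥) :
    ∃ rm : V ⟶ Y, f ≫ rm = 𝟙 Y := by
  have hcomm : ∀ (g : X) (y : Y), f.hom (Y.ρ g y) = V.ρ g (f.hom y) :=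
    fun g y => LinearMap.congr_fun (congrArg (fun φ => φ.hom.hom) (f.comm g)) y
  obtain ⟨r₀', hr₀'⟩ := f.hom.hom.hom.exists_leftInverse_of_injective hinj
  obtain ⟨r₀, hr₀⟩ : ∃ r₀ : (V : Type) →ₗ[ℂ] Y, ∀ y : Y, r₀ (f.hom y) = y :=
    ⟨r₀', fun y => LinearMap.congr_fun hr₀' y⟩
  have hcard : (Fintype.card X : ℂ) ≠ 0 := Nat.cast_ne_zero.mpr Fintype.card_ne_zero
  have hterm : ∀ (g : X) (y : Y), (Y.ρ g) (r₀ ((V.ρ g⁻¹) (f.hom y))) = y := by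
    intro g y
    rw [← hcomm g⁻¹ y]
    rw [hr₀ (Y.ρ g⁻¹ y), ← Module.End.mul_apply, ← map_mul, mul_inv_cancel, map_one,
      Module.End.one_apply]
  have hrf : ∀ y : Y,
      ((Fintype.card X : ℂ)⁻¹ • ∑ g : X, (Y.ρ g) ∘ₗ r₀ ∘ₗ (V.ρ g⁻¹)) (f.hom y) = y := by
    intro y
    simp only [LinearMap.smul_apply, LinearMap.sum_apply, LinearMap.comp_apply]
    simp only [hterm]
    rw [Finset.sum_const, Finset.card_univ, ← Nat.cast_smul_eq_nsmul ℂ, smul_smul,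
      inv_mul_cancel₀ hcard, one_smul]
  have requiv : ∀ (g : X) (v : V),
      ((Fintype.card X : ℂ)⁻¹ • ∑ x : X, (Y.ρ x) ∘ₗ r₀ ∘ₗ (V.ρ x⁻¹)) (V.ρ g v)
      = Y.ρ g (((Fintype.card X : ℂ)⁻¹ • ∑ x : X, (Y.ρ x) ∘ₗ r₀ ∘ₗ (V.ρ x⁻¹)) v) := by
    intro g v
    simp only [LinearMap.smul_apply, LinearMap.sum_apply, LinearMap.comp_apply]
    rw [map_smul (Y.ρ g), map_sum (Y.ρ g)]
    congr 1
    refine Fintype.sum_equiv (Equiv.mulLeft g⁻¹) _ _ ?_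
    intro h
    simp only [Equiv.coe_mulLeft]
    have e1 : (V.ρ h⁻¹) ((V.ρ g) v) = V.ρ ((g⁻¹ * h)⁻¹) v := by
      rw [← Module.End.mul_apply, ← map_mul]
      congr 1
      group
    have e2 : (Y.ρ g) ((Y.ρ (g⁻¹ * h)) (r₀ ((V.ρ ((g⁻¹ * h)⁻¹)) v)))
        = (Y.ρ h) (r₀ ((V.ρ ((g⁻¹ * h)⁻¹)) v)) := by
      rw [← Module.End.mul_apply, ← map_mul]
      congr 2
      group
    rw [e1, ← e2]
  refine ⟨⟨ObjectProperty.homMk (ModuleCat.ofHom ((Fintype.card X : ℂ)⁻¹ • ∑ x : X, (Y.ρ x) ∘ₗ r₀ ∘ₗ (V.ρ x⁻¹) : _ →ₗ[ℂ] _)), ?_⟩, ?_⟩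
  · intro g
    ext v
    exact requiv g v
  · apply Action.Hom.ext
    ext y
    exact hrf y

lemma simple_of_end_scalar (V : FDRep ℂ X)
    (hnz : ∃ v : V, v ≠ 0) (hsc : ∀ f : V ⟶ V, ∃ c : ℂ, f = c • 𝟙 V) :
    CategoryTheory.Simple V := by
  constructor
  intro Y f hmono
  constructor
  · intro hiso h0
    obtain ⟨v, hv⟩ := hnz
    obtain ⟨g, hg1, hg2⟩ := hiso.out
    rw [h0, Limits.comp_zero] at hg2
    have h1 : (𝟙 V : V ⟶ V) = 0 := hg2.symm
    exact hv (by calc v = (𝟙 V : V ⟶ V).hom v := rfl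
      _ = (0 : V ⟶ V).hom v := by rw [h1]
      _ = 0 := rfl)
  · intro hne
    have hcomm : ∀ (g : X) (y : Y), f.hom (Y.ρ g y) = V.ρ g (f.hom y) :=
      fun g y => LinearMap.congr_fun (congrArg (fun φ => φ.hom.hom) (f.comm g)) y
    have hinj : LinearMap.ker f.hom.hom.hom = ⊥ := by
      have hNinv : ∀ g : X, ∀ n ∈ LinearMap.ker f.hom.hom.hom,
          Y.ρ g n ∈ LinearMap.ker f.hom.hom.hom := by
        intro g n hn
        rw [LinearMap.mem_ker] at hn ⊢
        show f.hom (Y.ρ g n) = 0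
        rw [hcomm g n]
        show V.ρ g (f.hom n) = 0
        rw [show f.hom n = (0 : V) from hn, map_zero]
      set N : Submodule ℂ Y := LinearMap.ker f.hom.hom.hom with hN
      let repN : Representation ℂ X N :=
        { toFun := fun g => LinearMap.restrict (Y.ρ g) (hNinv g)
          map_one' := by ext n; simp [LinearMap.restrict_apply]
          map_mul' := by intro g h; ext n; simp [LinearMap.restrict_apply] }
      let WN : FDRep ℂ X := FDRep.of repN
      let ι : WN ⟶ Y := ⟨ObjectProperty.homMk (ModuleCat.ofHom (N.subtype : _ →ₗ[ℂ] _)), fun g => rfl⟩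
      have hι : ι ≫ f = 0 := by
        apply Action.Hom.ext
        ext n
        exact n.2
      have hι0 : ι = 0 := by
        rw [← cancel_mono f, hι, Limits.zero_comp]
      rw [Submodule.eq_bot_iff]
      intro x hx
      have hx2 : ι.hom ⟨x, hx⟩ = x := rfl
      rw [hι0] at hx2
      exact hx2.symm.trans rfl
    obtain ⟨rm, hfr⟩ := exists_retraction V Y f hinj
    obtain ⟨c, hc⟩ := hsc (rm ≫ f)
    have h3 : f ≫ (rm ≫ f) = f := by rw [← Category.assoc, hfr, Category.id_comp]
    rw [hc, CategoryTheory.Linear.comp_smul, Category.comp_id] at h3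
    have hc1 : c = 1 := by
      have h4 : (c - 1) • f = 0 := by rw [sub_smul, one_smul, h3, sub_self]
      rcases smul_eq_zero.mp h4 with h | h
      · exact sub_eq_zero.mp h
      · exact absurd h hne
    have hge : rm ≫ f = 𝟙 V := by rw [hc, hc1, one_smul]
    exact ⟨⟨rm, hfr, hge⟩⟩

lemma exists_ne_zero_of_simple (V : FDRep ℂ X) (h : CategoryTheory.Simple V) :
    ∃ v : V, v ≠ 0 := by
  by_contra hno
  push_neg at hno
  haveI := h
  apply CategoryTheory.id_nonzero V
  apply Action.Hom.ext
  ext v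
  exact (hno v).trans rfl

end SimpleOf

section Scalar
open CategoryTheory Module
variable [Group G] [Fintype G] {κ' : G → ℂ}

def conjEquiv {A B : Subgroup G}
    (hinv : ∀ a ∈ A, ∀ b ∈ B, a⁻¹ * b * a ∈ B ∧ κ' (a⁻¹ * b * a) = κ' b) (a : ↥A) :
    ↥B ≃ ↥B where
  toFun := fun b => ⟨(↑a)⁻¹ * ↑b * ↑a, (hinv ↑a a.2 ↑b b.2).1⟩
  invFun := fun b => ⟨↑a * ↑b * (↑a)⁻¹, by
    have h := (hinv (↑a)⁻¹ (inv_mem a.2) ↑b b.2).1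
    rwa [inv_inv] at h⟩
  left_inv := fun b => by ext; simp; group
  right_inv := fun b => by ext; simp; group

lemma clifford_scalar {A B : Subgroup G} (hBA : B ≤ A) (κ : G → ℂ)
    (hlin : IsLinOn B κ)
    (hinv : ∀ a ∈ A, ∀ b ∈ B, a⁻¹ * b * a ∈ B ∧ κ (a⁻¹ * b * a) = κ b)
    (V : FDRep ℂ ↥A) (hs : CategoryTheory.Simple V)
    (hip : (∑ b : ↥B, V.character ⟨↑b, hBA b.2⟩ * (starRingEnd ℂ) (κ ↑b)) ≠ 0) :
    ∀ b : G, ∀ hb : b ∈ B, V.ρ ⟨b, hBA hb⟩ = κ b • (LinearMap.id : (V : Type) →ₗ[ℂ] V) := by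
  classical
  set Plin : (V : Type) →ₗ[ℂ] V :=
    ∑ b : ↥B, (starRingEnd ℂ) (κ ↑b) • (V.ρ ⟨↑b, hBA b.2⟩ : (V : Type) →ₗ[ℂ] V) with hPlin
  have hcomm : ∀ (a : ↥A) (v : V), Plin (V.ρ a v) = V.ρ a (Plin v) := by
    intro a v
    rw [hPlin]
    simp only [LinearMap.sum_apply, LinearMap.smul_apply]
    rw [map_sum (V.ρ a)]
    refine Fintype.sum_equiv (conjEquiv (κ' := κ) hinv a) _ _ ?_
    intro b
    show (starRingEnd ℂ) (κ ↑b) • (V.ρ ⟨↑b, hBA b.2⟩) ((V.ρ a) v)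
      = (V.ρ a) ((starRingEnd ℂ) (κ ((↑a)⁻¹ * ↑b * ↑a)) •
          (V.ρ ⟨(↑a)⁻¹ * ↑b * ↑a, hBA (hinv ↑a a.2 ↑b b.2).1⟩) v)
    have hsc : (starRingEnd ℂ) (κ ((↑a)⁻¹ * ↑b * ↑a)) = (starRingEnd ℂ) (κ ↑b) := by
      rw [(hinv ↑a a.2 ↑b b.2).2]
    rw [map_smul (V.ρ a)]
    simp only [hsc]
    congr 1
    rw [← Module.End.mul_apply, ← Module.End.mul_apply, ← map_mul, ← map_mul]
    congr 2
    ext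
    push_cast
    group
  let P : V ⟶ V := ⟨ObjectProperty.homMk (ModuleCat.ofHom Plin), fun a => by ext v; exact hcomm a v⟩
  obtain ⟨c, hc⟩ := CategoryTheory.endomorphism_simple_eq_smul_id ℂ P
  have hPc : Plin = c • (LinearMap.id : (V : Type) →ₗ[ℂ] V) := by
    have h5 := congrArg (fun φ => φ.hom.hom.hom) hc
    exact h5.symm
  have htr : LinearMap.trace ℂ (V : Type) Plin
      = ∑ b : ↥B, V.character ⟨↑b, hBA b.2⟩ * (starRingEnd ℂ) (κ ↑b) := by
    rw [hPlin, map_sum]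
    refine Finset.sum_congr rfl fun b _ => ?_
    rw [map_smul, mul_comm]
    rfl
  have hc0 : c ≠ 0 := by
    intro h0
    apply hip
    rw [← htr, hPc, h0, zero_smul, map_zero]
  have hkey : ∀ (b : G) (hb : b ∈ B) (v : V),
      V.ρ ⟨b, hBA hb⟩ (Plin v) = κ b • Plin v := by
    intro b hb v
    rw [hPlin]
    simp only [LinearMap.sum_apply, LinearMap.smul_apply]
    rw [map_sum (V.ρ ⟨b, hBA hb⟩), Finset.smul_sum]
    refine Fintype.sum_equiv (Equiv.mulLeft (⟨b, hb⟩ : ↥B)) _ _ ?_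
    intro b'
    show (V.ρ ⟨b, hBA hb⟩) ((starRingEnd ℂ) (κ ↑b') • (V.ρ ⟨↑b', hBA b'.2⟩) v)
      = κ b • ((starRingEnd ℂ) (κ (↑(⟨b, hb⟩ * b' : ↥B))) •
          (V.ρ ⟨↑(⟨b, hb⟩ * b' : ↥B), hBA (⟨b, hb⟩ * b' : ↥B).2⟩) v)
    have hco : (starRingEnd ℂ) (κ (↑(⟨b, hb⟩ * b' : ↥B)))
        = (starRingEnd ℂ) (κ b) * (starRingEnd ℂ) (κ ↑b') := by
      show (starRingEnd ℂ) (κ (b * ↑b')) = _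
      rw [hlin.2 b hb ↑b' b'.2, map_mul]
    have hconjb : κ b * (starRingEnd ℂ) (κ b) = 1 := by
      rw [lin_conj_eq_inv hlin hb]
      exact (hlin.2 b hb b⁻¹ (inv_mem hb)).symm.trans (by rw [mul_inv_cancel, hlin.1])
    rw [map_smul (V.ρ ⟨b, hBA hb⟩)]
    simp only [hco]
    rw [smul_smul, ← mul_assoc, hconjb, one_mul]
    congr 1
    rw [← Module.End.mul_apply, ← map_mul]
    congr 1
  intro b hb
  have h2 : ∀ v : V, c • V.ρ ⟨b, hBA hb⟩ v = (κ b * c) • v := by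
    intro v
    have h6 := hkey b hb v
    rw [hPc] at h6
    simpa [smul_smul, mul_comm] using h6
  ext v
  have h3 : V.ρ ⟨b, hBA hb⟩ v = c⁻¹ • (κ b * c) • v := by
    rw [← h2 v, smul_smul, inv_mul_cancel₀ hc0, one_smul]
  have h4 : V.ρ ⟨b, hBA hb⟩ v = κ b • v := by
    rw [h3, smul_smul, mul_comm (κ b) c, ← mul_assoc, inv_mul_cancel₀ hc0, one_mul]
  exact h4

end Scalar


theorem stmt_4 [Group G] [Fintype G] (K H : Subgroup G) (κ : G → ℂ) (hκ : IsLinOn K κ)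
    (hHstab : ∀ h ∈ H, (∀ x : G, x ∈ K ↔ h⁻¹ * x * h ∈ K) ∧
      ∀ x ∈ K, κ (h⁻¹ * x * h) = κ x) :
    (∀ φ : ↥H → ℂ, IsIrrChar ↥H φ →
      innerSub (H ⊓ K) (resTo (H ⊓ K) inf_le_left φ) (fun x : ↥(H ⊓ K) => κ ↑x) ≠ 0 →
      ∃! χ : ↥(H ⊔ K) → ℂ, IsIrrChar ↥(H ⊔ K) χ ∧
        innerSub K (resTo K le_sup_right χ) (fun x : ↥K => κ ↑x) ≠ 0 ∧
        ∀ σ ∈ H, ∀ τ ∈ K, extZero (H ⊔ K) χ (σ * τ) = extZero H φ σ * κ τ) ∧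
    (∀ χ : ↥(H ⊔ K) → ℂ, IsIrrChar ↥(H ⊔ K) χ →
      innerSub K (resTo K le_sup_right χ) (fun x : ↥K => κ ↑x) ≠ 0 →
      IsIrrChar ↥H (resTo H le_sup_left χ) ∧
      innerSub (H ⊓ K) (resTo (H ⊓ K) inf_le_left (resTo H le_sup_left χ))
        (fun x : ↥(H ⊓ K) => κ ↑x) ≠ 0 ∧
      ∀ σ ∈ H, ∀ τ ∈ K,
        extZero (H ⊔ K) χ (σ * τ) = extZero H (resTo H le_sup_left χ) σ * κ τ) := by
  classical
  have hiff : ∀ h ∈ H, ∀ x : G, x ∈ K ↔ h⁻¹ * x * h ∈ K := fun h hh => (hHstab h hh).1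
  have hdecomp := mem_sup_decomp K H hiff
  have hmemJ : ∀ {σ τ : G}, σ ∈ H → τ ∈ K → σ * τ ∈ H ⊔ K := fun hσ hτ =>
    mul_mem ((le_sup_left : H ≤ H ⊔ K) hσ) ((le_sup_right : K ≤ H ⊔ K) hτ)
  have hlinHK : IsLinOn (H ⊓ K) κ := ⟨hκ.1, fun a ha b hb => hκ.2 a ha.2 b hb.2⟩
  have hinvH : ∀ a ∈ H, ∀ b ∈ H ⊓ K, a⁻¹ * b * a ∈ H ⊓ K ∧ κ (a⁻¹ * b * a) = κ b := by
    intro a ha b hb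
    obtain ⟨hbH, hbK⟩ := Subgroup.mem_inf.mp hb
    exact ⟨Subgroup.mem_inf.mpr ⟨mul_mem (mul_mem (inv_mem ha) hbH) ha,
      ((hHstab a ha).1 b).mp hbK⟩, (hHstab a ha).2 b hbK⟩
  have hinvJ : ∀ a ∈ H ⊔ K, ∀ b ∈ K, a⁻¹ * b * a ∈ K ∧ κ (a⁻¹ * b * a) = κ b := by
    intro a ha b hb
    obtain ⟨σ, τ, hσ, hτ, rfl⟩ := hdecomp a ha
    have h1 : σ⁻¹ * b * σ ∈ K := ((hHstab σ hσ).1 b).mp hb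
    have h2 : κ (σ⁻¹ * b * σ) = κ b := (hHstab σ hσ).2 b hb
    have heq : (σ * τ)⁻¹ * b * (σ * τ) = τ⁻¹ * ((σ⁻¹ * b * σ) * τ) := by group
    constructor
    · rw [heq]; exact mul_mem (inv_mem hτ) (mul_mem h1 hτ)
    · rw [heq, hκ.2 _ (inv_mem hτ) _ (mul_mem h1 hτ), hκ.2 _ h1 _ hτ, h2,
        mul_comm (κ b) (κ τ), ← mul_assoc, lin_inv_mul hκ hτ, one_mul]
  constructor
  · -- Part 1
    intro φ hφ hip
    obtain ⟨V, hsV, hchar⟩ := hφ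
    have hnzV := exists_ne_zero_of_simple V hsV
    have hφ1 : φ 1 ≠ 0 := by
      rw [← hchar, FDRep.char_one]
      obtain ⟨v, hv⟩ := hnzV
      haveI : Nontrivial (V : Type) := ⟨⟨v, 0, hv⟩⟩
      exact Nat.cast_ne_zero.mpr (Module.finrank_pos (R := ℂ) (M := (V : Type))).ne'
    have hipS : (∑ b : ↥(H ⊓ K), V.character ⟨↑b, (inf_le_left : H ⊓ K ≤ H) b.2⟩
        * (starRingEnd ℂ) (κ ↑b)) ≠ 0 := by
      intro h0
      apply hip
      rw [innerSub_eq]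
      have h1 : (∑ b : ↥(H ⊓ K), resTo (H ⊓ K) inf_le_left φ b
          * (starRingEnd ℂ) (κ ↑b)) = 0 := by
        rw [← h0]
        refine Finset.sum_congr rfl fun b _ => ?_
        congr 1
        rw [← hchar]
        rfl
      rw [h1, mul_zero]
    have hscal := clifford_scalar inf_le_left κ hlinHK hinvH V hsV hipS
    choose sσ sτ hsσ hsτ hseq using fun g : ↥(H ⊔ K) => hdecomp ↑g g.2
    have hwd : ∀ (g : ↥(H ⊔ K)) (σ τ : G) (hσ : σ ∈ H) (hτ : τ ∈ K), (g : G) = σ * τ →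
        κ (sτ g) • (V.ρ ⟨sσ g, hsσ g⟩ : (V : Type) →ₗ[ℂ] V) = κ τ • V.ρ ⟨σ, hσ⟩ := by
      intro g σ τ hσ hτ hg
      set u := (sσ g)⁻¹ * σ with hu
      have huH : u ∈ H := mul_mem (inv_mem (hsσ g)) hσ
      have he : sσ g * sτ g = σ * τ := (hseq g).symm.trans hg
      have huK' : u = sτ g * τ⁻¹ := by
        have h3 : σ = sσ g * sτ g * τ⁻¹ := by rw [he]; group
        rw [hu, h3]; group
      have huK : u ∈ K := by rw [huK']; exact mul_mem (hsτ g) (inv_mem hτ)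
      have huHK : u ∈ H ⊓ K := ⟨huH, huK⟩
      have hmul : u * τ = sτ g := by rw [huK']; group
      have hστ : σ = sσ g * u := by rw [hu]; group
      have hρ : (V.ρ ⟨σ, hσ⟩ : (V : Type) →ₗ[ℂ] V) = κ u • V.ρ ⟨sσ g, hsσ g⟩ := by
        have h7 : (⟨σ, hσ⟩ : ↥H) = ⟨sσ g, hsσ g⟩ * ⟨u, huH⟩ := by
          ext; push_cast; exact hστ
        rw [h7, map_mul, hscal u huHK, mul_smul_comm,
          show (LinearMap.id : (V : Type) →ₗ[ℂ] V) = 1 from rfl, mul_one]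
      rw [hρ, smul_smul]
      congr 1
      rw [← hmul, hκ.2 u huK τ hτ, mul_comm]
    let ρJ : Representation ℂ ↥(H ⊔ K) (V : Type) :=
      { toFun := fun g => κ (sτ g) • (V.ρ ⟨sσ g, hsσ g⟩ : (V : Type) →ₗ[ℂ] V)
        map_one' := by
          show κ (sτ 1) • (V.ρ ⟨sσ 1, hsσ 1⟩ : (V : Type) →ₗ[ℂ] V) = 1
          rw [hwd 1 1 1 (one_mem H) (one_mem K) (by simp), hκ.1, one_smul]
          exact map_one V.ρ
        map_mul' := by
          intro g₁ g₂
          show κ (sτ (g₁ * g₂)) • (V.ρ ⟨sσ (g₁ * g₂), hsσ (g₁ * g₂)⟩ : (V : Type) →ₗ[ℂ] V) = _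
          have hτm : (sσ g₂)⁻¹ * sτ g₁ * sσ g₂ * sτ g₂ ∈ K :=
            mul_mem (((hHstab _ (hsσ g₂)).1 _).mp (hsτ g₁)) (hsτ g₂)
          have hm : ((g₁ * g₂ : ↥(H ⊔ K)) : G)
              = (sσ g₁ * sσ g₂) * ((sσ g₂)⁻¹ * sτ g₁ * sσ g₂ * sτ g₂) := by
            push_cast
            rw [hseq g₁, hseq g₂]
            group
          rw [hwd (g₁ * g₂) _ _ (mul_mem (hsσ g₁) (hsσ g₂)) hτm hm]
          have hκm : κ ((sσ g₂)⁻¹ * sτ g₁ * sσ g₂ * sτ g₂) = κ (sτ g₁) * κ (sτ g₂) := by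
            rw [hκ.2 _ (((hHstab _ (hsσ g₂)).1 _).mp (hsτ g₁)) _ (hsτ g₂),
              (hHstab _ (hsσ g₂)).2 _ (hsτ g₁)]
          have hρm : (V.ρ ⟨sσ g₁ * sσ g₂, mul_mem (hsσ g₁) (hsσ g₂)⟩ : (V : Type) →ₗ[ℂ] V)
              = V.ρ ⟨sσ g₁, hsσ g₁⟩ * V.ρ ⟨sσ g₂, hsσ g₂⟩ := by
            rw [← map_mul]
            rfl
          rw [hκm, hρm]
          exact (smul_mul_smul_comm _ _ _ _).symm }
    let W : FDRep ℂ ↥(H ⊔ K) := FDRep.of ρJ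
    have hWval : ∀ (σ τ : G) (hσ : σ ∈ H) (hτ : τ ∈ K) (hm : σ * τ ∈ H ⊔ K),
        W.character ⟨σ * τ, hm⟩ = φ ⟨σ, hσ⟩ * κ τ := by
      intro σ τ hσ hτ hm
      show LinearMap.trace ℂ (V : Type) (ρJ ⟨σ * τ, hm⟩) = _
      have h10 : ρJ ⟨σ * τ, hm⟩ = κ τ • (V.ρ ⟨σ, hσ⟩ : (V : Type) →ₗ[ℂ] V) :=
        hwd ⟨σ * τ, hm⟩ σ τ hσ hτ rfl
      rw [h10, map_smul, smul_eq_mul, mul_comm]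
      congr 1
      rw [← hchar]
      rfl
    have hWsc : ∀ f : W ⟶ W, ∃ c : ℂ, f = c • 𝟙 W := by
      intro f
      have hfc : ∀ (h : ↥H) (v : V), f.hom (V.ρ h v) = V.ρ h (f.hom v) := by
        intro h v
        have h11 := LinearMap.congr_fun (congrArg (fun φ => φ.hom.hom) (f.comm ⟨↑h, (le_sup_left : H ≤ H ⊔ K) h.2⟩)) v
        have h12 : ρJ ⟨↑h, (le_sup_left : H ≤ H ⊔ K) h.2⟩ = (V.ρ h : (V : Type) →ₗ[ℂ] V) := by
          show κ (sτ ⟨↑h, _⟩) • (V.ρ ⟨sσ ⟨↑h, _⟩, hsσ _⟩ : (V : Type) →ₗ[ℂ] V) = V.ρ h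
          rw [hwd ⟨↑h, _⟩ ↑h 1 h.2 (one_mem K) (by rw [mul_one]), hκ.1, one_smul]
        calc f.hom (V.ρ h v) = f.hom (ρJ ⟨↑h, (le_sup_left : H ≤ H ⊔ K) h.2⟩ v) := by rw [h12]
          _ = ρJ ⟨↑h, (le_sup_left : H ≤ H ⊔ K) h.2⟩ (f.hom v) := h11
          _ = V.ρ h (f.hom v) := by rw [h12]
      let fV : V ⟶ V := ⟨f.hom, fun h => by ext v; exact hfc h v⟩
      haveI := hsV
      obtain ⟨c, hc⟩ := CategoryTheory.endomorphism_simple_eq_smul_id ℂ fV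
      exact ⟨c, Action.Hom.ext (congrArg Action.Hom.hom hc).symm⟩
    have hWsimple : CategoryTheory.Simple W := by
      apply simple_of_end_scalar W ?_ hWsc
      obtain ⟨v, hv⟩ := hnzV
      exact ⟨v, hv⟩
    refine ⟨W.character, ⟨⟨W, hWsimple, rfl⟩, ?_, ?_⟩, ?_⟩
    · have hval1 : ∀ x : ↥K, resTo K le_sup_right W.character x = φ 1 * κ ↑x := by
        intro x
        show W.character ⟨↑x, (le_sup_right : K ≤ H ⊔ K) x.2⟩ = φ 1 * κ ↑x
        calc W.character ⟨↑x, (le_sup_right : K ≤ H ⊔ K) x.2⟩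
            = W.character ⟨1 * ↑x, by rw [one_mul]; exact (le_sup_right : K ≤ H ⊔ K) x.2⟩ := by
              congr 1; ext; exact (one_mul _).symm
          _ = φ ⟨1, one_mem H⟩ * κ ↑x := hWval 1 ↑x (one_mem H) x.2 _
          _ = φ 1 * κ ↑x := rfl
      rw [innerSub_scaled hκ _ _ hval1]
      exact hφ1
    · intro σ hσ τ hτ
      rw [extZero, dif_pos (hmemJ hσ hτ), extZero, dif_pos hσ]
      exact hWval σ τ hσ hτ (hmemJ hσ hτ)
    · rintro χ' ⟨hirr', hover', hprod'⟩
      funext g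
      obtain ⟨σ, τ, hσ, hτ, hg⟩ := hdecomp ↑g g.2
      have h15 := hprod' σ hσ τ hτ
      rw [extZero, dif_pos (hmemJ hσ hτ), extZero, dif_pos hσ] at h15
      have h16 : χ' g = χ' ⟨σ * τ, hmemJ hσ hτ⟩ := by congr 1; ext; exact hg
      have h17 : W.character g = W.character ⟨σ * τ, hmemJ hσ hτ⟩ := by
        congr 1; ext; exact hg
      rw [h16, h15, h17, hWval σ τ hσ hτ (hmemJ hσ hτ)]
  · -- Part 2
    intro χ hχ hover
    obtain ⟨V, hsV, hchar⟩ := hχ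
    have hnzV := exists_ne_zero_of_simple V hsV
    have hipK : (∑ b : ↥K, V.character ⟨↑b, (le_sup_right : K ≤ H ⊔ K) b.2⟩
        * (starRingEnd ℂ) (κ ↑b)) ≠ 0 := by
      intro h0
      apply hover
      rw [innerSub_eq]
      have h1 : (∑ b : ↥K, resTo K le_sup_right χ b * (starRingEnd ℂ) (κ ↑b)) = 0 := by
        rw [← h0]
        refine Finset.sum_congr rfl fun b _ => ?_
        congr 1
        rw [← hchar]
        rfl
      rw [h1, mul_zero]
    have hscal := clifford_scalar le_sup_right κ hκ hinvJ V hsV hipK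
    have hval : ∀ (σ τ : G) (hσ : σ ∈ H) (hτ : τ ∈ K) (hm : σ * τ ∈ H ⊔ K),
        χ ⟨σ * τ, hm⟩ = χ ⟨σ, (le_sup_left : H ≤ H ⊔ K) hσ⟩ * κ τ := by
      intro σ τ hσ hτ hm
      rw [← hchar]
      show LinearMap.trace ℂ (V : Type) (V.ρ ⟨σ * τ, hm⟩)
        = LinearMap.trace ℂ (V : Type) (V.ρ ⟨σ, (le_sup_left : H ≤ H ⊔ K) hσ⟩) * κ τ
      have h8 : (⟨σ * τ, hm⟩ : ↥(H ⊔ K))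
          = ⟨σ, (le_sup_left : H ≤ H ⊔ K) hσ⟩ * ⟨τ, (le_sup_right : K ≤ H ⊔ K) hτ⟩ := rfl
      rw [h8, map_mul, hscal τ hτ, mul_smul_comm,
        show (LinearMap.id : (V : Type) →ₗ[ℂ] V) = 1 from rfl, mul_one,
        map_smul, smul_eq_mul, mul_comm]
    let ι : ↥H →* ↥(H ⊔ K) := Subgroup.inclusion le_sup_left
    let Vres : FDRep ℂ ↥H := FDRep.of (V.ρ.comp ι)
    have hresval : Vres.character = resTo H le_sup_left χ := by
      funext σ
      show LinearMap.trace ℂ (V : Type) (V.ρ (ι σ)) = χ ⟨↑σ, (le_sup_left : H ≤ H ⊔ K) σ.2⟩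
      rw [← hchar]
      rfl
    have hsc : ∀ f : Vres ⟶ Vres, ∃ c : ℂ, f = c • 𝟙 Vres := by
      intro f
      have hfc : ∀ (g : ↥(H ⊔ K)) (v : V), f.hom (V.ρ g v) = V.ρ g (f.hom v) := by
        intro g v
        obtain ⟨σ, τ, hσ, hτ, hg⟩ := hdecomp ↑g g.2
        have hgeq : g = (⟨σ, (le_sup_left : H ≤ H ⊔ K) hσ⟩ : ↥(H ⊔ K))
            * ⟨τ, (le_sup_right : K ≤ H ⊔ K) hτ⟩ := by
          ext; push_cast; exact hg
        rw [hgeq, map_mul, hscal τ hτ, mul_smul_comm,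
          show (LinearMap.id : (V : Type) →ₗ[ℂ] V) = 1 from rfl, mul_one]
        rw [LinearMap.smul_apply]
        erw [map_smul f.hom.hom.hom]
        rw [LinearMap.smul_apply]
        congr 1
        exact LinearMap.congr_fun (congrArg (fun φ => φ.hom.hom) (f.comm ⟨σ, hσ⟩)) v
      let fV : V ⟶ V := ⟨f.hom, fun g => by ext v; exact hfc g v⟩
      haveI := hsV
      obtain ⟨c, hc⟩ := CategoryTheory.endomorphism_simple_eq_smul_id ℂ fV
      exact ⟨c, Action.Hom.ext (congrArg Action.Hom.hom hc).symm⟩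
    have hressimple : CategoryTheory.Simple Vres := by
      apply simple_of_end_scalar Vres ?_ hsc
      obtain ⟨v, hv⟩ := hnzV
      exact ⟨v, hv⟩
    have hfr : ((Module.finrank ℂ (V : Type) : ℕ) : ℂ) ≠ 0 := by
      obtain ⟨v, hv⟩ := hnzV
      haveI : Nontrivial (V : Type) := ⟨⟨v, 0, hv⟩⟩
      exact Nat.cast_ne_zero.mpr (Module.finrank_pos (R := ℂ) (M := (V : Type))).ne'
    refine ⟨⟨Vres, hressimple, hresval⟩, ?_, ?_⟩
    · have hval2 : ∀ x : ↥(H ⊓ K), resTo (H ⊓ K) inf_le_left (resTo H le_sup_left χ) x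
          = ((Module.finrank ℂ (V : Type) : ℕ) : ℂ) * κ ↑x := by
        intro x
        show χ ⟨↑x, (le_sup_left : H ≤ H ⊔ K) ((inf_le_left : H ⊓ K ≤ H) x.2)⟩ = _
        rw [← hchar]
        show LinearMap.trace ℂ (V : Type) (V.ρ ⟨↑x, (le_sup_right : K ≤ H ⊔ K) (Subgroup.mem_inf.mp x.2).2⟩) = _
        rw [hscal ↑x (Subgroup.mem_inf.mp x.2).2, map_smul, smul_eq_mul, LinearMap.trace_id, mul_comm]
      rw [innerSub_scaled hlinHK _ _ hval2]
      exact hfr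
    · intro σ hσ τ hτ
      rw [extZero, dif_pos (hmemJ hσ hτ), extZero, dif_pos hσ]
      exact hval σ τ hσ hτ (hmemJ hσ hτ)

end Aux2


end
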